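/- Assume k ≥ 2. Let W ⊆ M'_V ∪ M'_E with |W| ≤ k + k(k−1)/2, write X_V = {v ∈ V : m'_v ∈ W} and X_E = {e ∈ E : m'_e ∈ W}, and let M̂ be a stable matching in I_W covering w* that contains no problematic pair. Then {m*,w*} ∈ M̂; every selector woman in S is matched by M̂ to a man of the form m_e; the set Ê = {e ∈ E : M̂(m_e) ∈ S} has exactly k(k−1)/2 elements; Ê ⊆ X_E; every endpoint of every edge of Ê lies in X_V; and consequently the edges of Ê span exactly k vertices which form a clique of size k in G. -/

import Mathlib

/-- A Stable Roommates instance on agent type `α`: a symmetric, loopless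
acceptability relation, together with, for each agent `u`, a strict linear
order `pref u` over the agents acceptable to `u`
(`pref u x y` means `u` strictly prefers `x` to `y`). -/
structure SR (α : Type*) where
  accept : α → α → Prop
  symm : ∀ {u v}, accept u v → accept v u
  loopless : ∀ u, ¬ accept u u
  pref : α → α → α → Prop
  pref_acc : ∀ {u x y}, pref u x y → accept u x ∧ accept u y
  pref_irrefl : ∀ u x, ¬ pref u x x
  pref_trans : ∀ {u x y z}, pref u x y → pref u y z → pref u x z
  pref_total : ∀ {u x y}, accept u x → accept u y → x ≠ y → pref u x y ∨ pref u y x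

namespace SR

variable {α : Type*}

/-- `M` is a matching in `I`: a set of acceptable pairs in which
every agent has at most one partner. -/
def IsMatching (I : SR α) (M : Finset (Sym2 α)) : Prop :=
  (∀ u v : α, s(u, v) ∈ M → I.accept u v) ∧
  (∀ u v w : α, s(u, v) ∈ M → s(u, w) ∈ M → v = w)

/-- The pair `{u, v}` blocks the matching `M` in `I`. -/
def Blocks (I : SR α) (M : Finset (Sym2 α)) (u v : α) : Prop :=
  I.accept u v ∧ (∀ w, s(u, w) ∈ M → I.pref u v w) ∧ (∀ w, s(v, w) ∈ M → I.pref v u w)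

/-- `M` is a stable matching in `I`. -/
def IsStable (I : SR α) (M : Finset (Sym2 α)) : Prop :=
  I.IsMatching M ∧ ∀ u v, ¬ I.Blocks M u v

/-- The instance obtained from `I` by deleting the acceptability of the pairs in `F`. -/
def delPairs (I : SR α) (F : Set (Sym2 α)) : SR α where
  accept u v := I.accept u v ∧ s(u, v) ∉ F
  symm h := ⟨I.symm h.1, by rw [Sym2.eq_swap]; exact h.2⟩
  loopless u h := I.loopless u h.1
  pref u x y := I.pref u x y ∧ s(u, x) ∉ F ∧ s(u, y) ∉ F
  pref_acc h := ⟨⟨(I.pref_acc h.1).1, h.2.1⟩, ⟨(I.pref_acc h.1).2, h.2.2⟩⟩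
  pref_irrefl u x h := I.pref_irrefl u x h.1
  pref_trans h1 h2 := ⟨I.pref_trans h1.1 h2.1, h1.2.1, h2.2.2⟩
  pref_total hx hy hne :=
    (I.pref_total hx.1 hy.1 hne).imp (fun h => ⟨h, hx.2, hy.2⟩) (fun h => ⟨h, hy.2, hx.2⟩)

/-- The sub-instance of `I` induced by the agent set `T`. -/
def induce (I : SR α) (T : Set α) : SR α where
  accept u v := I.accept u v ∧ u ∈ T ∧ v ∈ T
  symm h := ⟨I.symm h.1, h.2.2, h.2.1⟩
  loopless u h := I.loopless u h.1
  pref u x y := I.pref u x y ∧ u ∈ T ∧ x ∈ T ∧ y ∈ T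
  pref_acc h := ⟨⟨(I.pref_acc h.1).1, h.2.1, h.2.2.1⟩, ⟨(I.pref_acc h.1).2, h.2.1, h.2.2.2⟩⟩
  pref_irrefl u x h := I.pref_irrefl u x h.1
  pref_trans h1 h2 := ⟨I.pref_trans h1.1 h2.1, h1.2.1, h1.2.2.1, h2.2.2.2⟩
  pref_total hx hy hne :=
    (I.pref_total hx.1 hy.1 hne).imp (fun h => ⟨h, hx.2.1, hx.2.2, hy.2.2⟩)
      (fun h => ⟨h, hx.2.1, hy.2.2, hx.2.2⟩)

/-- The instance obtained from `I` by deleting the agents in `W`. -/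
def delAgents (I : SR α) (W : Set α) : SR α := I.induce Wᶜ

end SR

/-! ## The clique construction `I(G, k)` -/

/-- Agents of the instance `I(G, k)`: women `w_v`, `w_e`, selector women `s_i`, `w*`;
men `m'_v`, `m_e`, `m'_e`, dummy men `d_i`, and `m*`.  (Agents whose index is out of
range — `we e` or `me e` or `me' e` with `e` not an edge, `sel i` with
`i ≥ k(k-1)/2`, `dum i` with `i ≥ |V| - k` — are inactive: they accept nobody.) -/
inductive CAg (V : Type*) where
  | wv : V → CAg V          -- woman `w_v`
  | we : Sym2 V → CAg V     -- woman `w_e`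
  | sel : ℕ → CAg V         -- selector woman `s_i`
  | wstar : CAg V           -- woman `w*`
  | mv : V → CAg V          -- man `m'_v`
  | me : Sym2 V → CAg V     -- man `m_e`
  | me' : Sym2 V → CAg V    -- man `m'_e`
  | dum : ℕ → CAg V         -- dummy man `d_i`
  | mstar : CAg V           -- man `m*`
  deriving DecidableEq

open CAg

/-- The acceptability lists of `I(G, k)` (from the men's side, plus `m*`'s list);
`q = k(k-1)/2` is the number of selector women and `d = |V| - k` the number of dummies. -/
def cliqueBaseAcc {V : Type*} (G : SimpleGraph V) (q d : ℕ) (x y : CAg V) : Prop :=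
  (x = mstar ∧ ((∃ i < q, y = sel i) ∨ y = wstar)) ∨
  (∃ i < q, x = sel i ∧ ∃ e ∈ G.edgeSet, y = me e) ∨
  (∃ e ∈ G.edgeSet, x = me e ∧ (y = we e ∨ ∃ v ∈ e, y = wv v)) ∨
  (∃ e ∈ G.edgeSet, x = me' e ∧ y = we e) ∨
  (∃ v : V, x = mv v ∧ y = wv v) ∨
  (∃ i < d, x = dum i ∧ ∃ v : V, y = wv v)

/-- `I` is a realization of the instance `I(G, k)`: its acceptability relation is as
prescribed, and its preferences respect all comparisons forced by the construction
(within each unordered set in a preference list the order is arbitrary). -/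
def IsCliqueInstance {V : Type*} [Fintype V] (G : SimpleGraph V) (k : ℕ)
    (I : SR (CAg V)) : Prop :=
  (∀ x y, I.accept x y ↔
    (cliqueBaseAcc G (k * (k - 1) / 2) (Fintype.card V - k) x y ∨
     cliqueBaseAcc G (k * (k - 1) / 2) (Fintype.card V - k) y x)) ∧
  -- m*: S ≻ w*
  (∀ i < k * (k - 1) / 2, I.pref mstar (sel i) wstar) ∧
  -- s: {m_e : e ∈ E} ≻ m*
  (∀ i < k * (k - 1) / 2, ∀ e ∈ G.edgeSet, I.pref (sel i) (me e) mstar) ∧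
  -- m_e: w_e ≻ {w_v : v ∈ e} ≻ S
  (∀ e ∈ G.edgeSet, ∀ v ∈ e, I.pref (me e) (we e) (wv v)) ∧
  (∀ e ∈ G.edgeSet, ∀ v ∈ e, ∀ i < k * (k - 1) / 2, I.pref (me e) (wv v) (sel i)) ∧
  (∀ e ∈ G.edgeSet, ∀ i < k * (k - 1) / 2, I.pref (me e) (we e) (sel i)) ∧
  -- w_e: m'_e ≻ m_e
  (∀ e ∈ G.edgeSet, I.pref (we e) (me' e) (me e)) ∧
  -- w_v: m'_v ≻ {m_e : e ∋ v} ≻ D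
  (∀ v : V, ∀ e ∈ G.edgeSet, v ∈ e → I.pref (wv v) (mv v) (me e)) ∧
  (∀ v : V, ∀ e ∈ G.edgeSet, v ∈ e → ∀ i < Fintype.card V - k, I.pref (wv v) (me e) (dum i)) ∧
  (∀ v : V, ∀ i < Fintype.card V - k, I.pref (wv v) (mv v) (dum i))

/-- The original agents of `I(G, k)`: everybody except the addable men `m'_v`, `m'_e`. -/
def cliqueOrig {V : Type*} [Fintype V] (G : SimpleGraph V) (k : ℕ) : Set (CAg V) :=
  {x | (∃ v : V, x = wv v) ∨ (∃ e ∈ G.edgeSet, x = we e) ∨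
    (∃ i < k * (k - 1) / 2, x = sel i) ∨ x = wstar ∨
    (∃ e ∈ G.edgeSet, x = me e) ∨ (∃ i < Fintype.card V - k, x = dum i) ∨ x = mstar}

/-- The addable men `M'_V = {m'_v : v ∈ V}`. -/
def addableMV {V : Type*} : Set (CAg V) := {x | ∃ v : V, x = mv v}

/-- The addable men `M'_E = {m'_e : e ∈ E}`. -/
def addableME {V : Type*} (G : SimpleGraph V) : Set (CAg V) :=
  {x | ∃ e ∈ G.edgeSet, x = me' e}

/-- A pair `{m_e, w_v}` with `v` an endpoint of the edge `e` is *problematic*. -/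
def Problematic {V : Type*} (G : SimpleGraph V) (p : Sym2 (CAg V)) : Prop :=
  ∃ e ∈ G.edgeSet, ∃ v ∈ e, p = s(me e, wv v)

private lemma csm_aux_choose_lt {n k : ℕ} (h : n < k) (hk : 2 ≤ k) :
    n.choose 2 < k.choose 2 := by
  obtain ⟨m, rfl⟩ : ∃ m, k = m + 1 := ⟨k - 1, by omega⟩
  calc n.choose 2 ≤ m.choose 2 := Nat.choose_le_choose 2 (by omega)
    _ < m.choose 1 + m.choose 2 := by
        have : 0 < m.choose 1 := by simp [Nat.choose_one_right]; omega
        omega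
    _ = (m + 1).choose 2 := (Nat.choose_succ_succ m 1).symm

private lemma csm_aux_nondiag_card {V : Type*} [DecidableEq V] (s : Finset V) :
    (s.sym2.filter (fun z => ¬ z.IsDiag)).card = s.card.choose 2 := by
  have hdiag : s.sym2.filter (fun z => z.IsDiag) = s.image Sym2.diag := by
    ext z
    induction z using Sym2.ind with
    | _ a b =>
      simp only [Finset.mem_filter, Finset.mk_mem_sym2_iff, Sym2.mk_isDiag_iff,
        Finset.mem_image]
      constructor
      · rintro ⟨⟨ha, hb⟩, rfl⟩; exact ⟨a, ha, rfl⟩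
      · rintro ⟨c, hc, hcz⟩
        rw [Sym2.diag] at hcz
        obtain ⟨rfl, rfl⟩ | ⟨rfl, rfl⟩ := Sym2.eq_iff.mp hcz <;> exact ⟨⟨hc, hc⟩, rfl⟩
  have h1 := Finset.card_filter_add_card_filter_not
    (s := s.sym2) (fun z => z.IsDiag)
  have h2 : (s.sym2.filter (fun z => z.IsDiag)).card = s.card := by
    rw [hdiag, Finset.card_image_of_injective _ Sym2.diag_injective]
  have h3 : s.sym2.card = (s.card + 1).choose 2 := Finset.card_sym2 s
  have h4 : (s.card + 1).choose 2 = s.card.choose 1 + s.card.choose 2 :=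
    Nat.choose_succ_succ s.card 1
  simp only [Nat.choose_one_right] at h4
  omega

/-- Assume `k ≥ 2`. Let `W ⊆ M'_V ∪ M'_E` with `|W| ≤ k + k(k-1)/2`,
let `X_V = {v : m'_v ∈ W}`, `X_E = {e ∈ E : m'_e ∈ W}`, and let `M̂` be a stable
matching in `I_W` covering `w*` containing no problematic pair. Then
`{m*, w*} ∈ M̂`; every selector woman is matched by `M̂` to some man `m_e`; the set
`Ê = {e ∈ E : M̂(m_e) ∈ S}` has exactly `k(k-1)/2` elements; `Ê ⊆ X_E`; every
endpoint of every edge of `Ê` lies in `X_V`; and the edges of `Ê` span exactly `k`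
vertices, which form a clique of size `k` in `G`. -/
theorem csm_addAg_clique_structure {V : Type*} [Fintype V] [DecidableEq V]
    (G : SimpleGraph V) (k : ℕ) (hk : 2 ≤ k)
    (I : SR (CAg V)) (hI : IsCliqueInstance G k I)
    (W : Set (CAg V)) (hW : W ⊆ addableMV ∪ addableME G)
    (hWcard : W.ncard ≤ k + k * (k - 1) / 2)
    (M : Finset (Sym2 (CAg V)))
    (hM : (I.induce (cliqueOrig G k ∪ W)).IsStable M)
    (hcov : ∃ y, s(CAg.wstar, y) ∈ M)
    (hnoprob : ∀ p ∈ M, ¬ Problematic G p) :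
    s(CAg.mstar, CAg.wstar) ∈ M ∧
    (∀ i < k * (k - 1) / 2, ∃ e ∈ G.edgeSet, s(CAg.sel i, CAg.me e) ∈ M) ∧
    ∀ XV : Set V, XV = {v : V | CAg.mv v ∈ W} →
    ∀ XE : Set (Sym2 V), XE = {e : Sym2 V | e ∈ G.edgeSet ∧ CAg.me' e ∈ W} →
    ∀ Ehat : Set (Sym2 V),
      Ehat = {e : Sym2 V | e ∈ G.edgeSet ∧ ∃ i < k * (k - 1) / 2, s(CAg.me e, CAg.sel i) ∈ M} →
      Ehat.ncard = k * (k - 1) / 2 ∧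
      Ehat ⊆ XE ∧
      (∀ e ∈ Ehat, ∀ v ∈ e, v ∈ XV) ∧
      {v : V | ∃ e ∈ Ehat, v ∈ e}.ncard = k ∧
      G.IsClique {v : V | ∃ e ∈ Ehat, v ∈ e} := by
  classical
  obtain ⟨hb, hp1, hp2, hp3, hp4, hp5, hp6, hp7, hp8, hp9⟩ := hI
  obtain ⟨⟨haccM, huniq⟩, hstab⟩ := hM
  set q := k * (k - 1) / 2 with hqdef
  set T := cliqueOrig G k ∪ W with hTdef
  have hacc' : ∀ u v : CAg V, s(u, v) ∈ M → I.accept u v ∧ u ∈ T ∧ v ∈ T := haccM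
  have hstab' : ∀ u v : CAg V,
      ¬ ((I.accept u v ∧ u ∈ T ∧ v ∈ T) ∧
        (∀ w, s(u, w) ∈ M → I.pref u v w ∧ u ∈ T ∧ v ∈ T ∧ w ∈ T) ∧
        (∀ w, s(v, w) ∈ M → I.pref v u w ∧ v ∈ T ∧ u ∈ T ∧ w ∈ T)) := hstab
  -- membership helpers
  have horig_mstar : (mstar : CAg V) ∈ T := by left; simp [cliqueOrig]
  have horig_wstar : (wstar : CAg V) ∈ T := by left; simp [cliqueOrig]
  have horig_sel : ∀ i < q, (sel i : CAg V) ∈ T := by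
    intro i hi; left; exact Or.inr (Or.inr (Or.inl ⟨i, hi, rfl⟩))
  have horig_wv : ∀ v : V, (wv v : CAg V) ∈ T := by
    intro v; left; exact Or.inl ⟨v, rfl⟩
  have horig_we : ∀ e ∈ G.edgeSet, (we e : CAg V) ∈ T := by
    intro e he; left; exact Or.inr (Or.inl ⟨e, he, rfl⟩)
  have horig_me : ∀ e ∈ G.edgeSet, (me e : CAg V) ∈ T := by
    intro e he; left; exact Or.inr (Or.inr (Or.inr (Or.inr (Or.inl ⟨e, he, rfl⟩))))
  -- Step 1: {m*, w*} ∈ M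
  have hstar : s(mstar, wstar) ∈ M := by
    obtain ⟨y, hy⟩ := hcov
    have h := (hacc' _ _ hy).1
    rw [hb] at h; simp only [cliqueBaseAcc] at h; simp at h
    subst h
    rwa [Sym2.eq_swap] at hy
  -- Step 2: every selector woman is matched to some mₑ
  have hselpart : ∀ i < q, ∃ e ∈ G.edgeSet, s(sel i, me e) ∈ M := by
    intro i hi
    by_contra hno
    push_neg at hno
    have hunm : ∀ w, s(sel i, w) ∉ M := by
      intro w hw
      have h := (hacc' _ _ hw).1
      rw [hb] at h; simp only [cliqueBaseAcc] at h; simp at h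
      rcases h with ⟨hj, e, he, rfl⟩ | ⟨rfl, hiq⟩
      · exact hno e he hw
      · have := huniq mstar wstar (sel i) hstar (by rwa [Sym2.eq_swap] at hw)
        simp at this
    refine hstab' mstar (sel i) ⟨⟨?_, horig_mstar, horig_sel i hi⟩, ?_, ?_⟩
    · rw [hb]; exact Or.inl (Or.inl ⟨rfl, Or.inl ⟨i, hi, rfl⟩⟩)
    · intro w hw
      have hww : wstar = w := huniq mstar wstar w hstar hw
      subst hww
      exact ⟨hp1 i hi, horig_mstar, horig_sel i hi, horig_wstar⟩
    · intro w hw; exact absurd hw (hunm w)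
  refine ⟨hstar, hselpart, ?_⟩
  rintro XV rfl XE rfl Ehat rfl
  set Ehat : Set (Sym2 V) :=
    {e : Sym2 V | e ∈ G.edgeSet ∧ ∃ i < q, s(CAg.me e, CAg.sel i) ∈ M} with hEhat
  -- Step 3: |Ê| = q
  have hEfin : Ehat.Finite := Set.toFinite _
  have hEcard : Ehat.ncard = q := by
    have key : (Finset.range q).card = Ehat.toFinset.card := by
      apply Finset.card_bij
        (i := fun i hi => (hselpart i (Finset.mem_range.mp hi)).choose)
      · intro i hi
        obtain ⟨he, hm⟩ := (hselpart i (Finset.mem_range.mp hi)).choose_spec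
        simp only [Set.mem_toFinset, hEhat, Set.mem_setOf_eq]
        exact ⟨he, i, Finset.mem_range.mp hi, by rwa [Sym2.eq_swap] at hm⟩
      · intro i hi j hj hij
        obtain ⟨hei, hmi⟩ := (hselpart i (Finset.mem_range.mp hi)).choose_spec
        obtain ⟨hej, hmj⟩ := (hselpart j (Finset.mem_range.mp hj)).choose_spec
        rw [hij] at hmi
        have h1 : s(me (hselpart j (Finset.mem_range.mp hj)).choose, sel i) ∈ M := by
          rwa [Sym2.eq_swap] at hmi
        have h2 : s(me (hselpart j (Finset.mem_range.mp hj)).choose, sel j) ∈ M := by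
          rwa [Sym2.eq_swap] at hmj
        exact CAg.sel.inj (huniq _ _ _ h1 h2)
      · intro e he
        simp only [Set.mem_toFinset, hEhat, Set.mem_setOf_eq] at he
        obtain ⟨heE, i, hi, hm⟩ := he
        refine ⟨i, Finset.mem_range.mpr hi, ?_⟩
        obtain ⟨hei, hmi⟩ := (hselpart i hi).choose_spec
        have h2 : s(sel i, me e) ∈ M := by rwa [Sym2.eq_swap] at hm
        exact CAg.me.inj (huniq (sel i) _ _ hmi h2)
    rw [Set.ncard_eq_toFinset_card' Ehat, ← key, Finset.card_range]
  -- partner characterizations used below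
  have hme_partner : ∀ e ∈ G.edgeSet, ∀ i < q, s(me e, sel i) ∈ M →
      ∀ w, s(me e, w) ∈ M → w = sel i := by
    intro e he i hi hm w hw
    exact huniq (me e) w (sel i) hw hm
  -- Step 4: Ê ⊆ X_E
  have hEX : ∀ e ∈ Ehat, CAg.me' e ∈ W := by
    intro e heh
    obtain ⟨he, i, hi, hm⟩ := heh
    have hkey : s(we e, me' e) ∈ M := by
      by_contra hno
      have hunm : ∀ w, s(we e, w) ∉ M := by
        intro w hw
        have h := (hacc' _ _ hw).1
        rw [hb] at h; simp only [cliqueBaseAcc] at h; simp at h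
        rcases h with ⟨heE, rfl⟩ | ⟨heE, rfl⟩
        · have := huniq (me e) (we e) (sel i) (by rwa [Sym2.eq_swap] at hw) hm
          simp at this
        · exact hno hw
      refine hstab' (me e) (we e) ⟨⟨?_, horig_me e he, horig_we e he⟩, ?_, ?_⟩
      · rw [hb]; exact Or.inl (Or.inr (Or.inr (Or.inl ⟨e, he, rfl, Or.inl rfl⟩)))
      · intro w hw
        have := hme_partner e he i hi hm w hw
        subst this
        exact ⟨hp5 e he i hi, horig_me e he, horig_we e he, horig_sel i hi⟩
      · intro w hw; exact absurd hw (hunm w)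
    have hT := (hacc' _ _ hkey).2.2
    rcases hT with horg | hW
    · exfalso; revert horg; simp [cliqueOrig]
    · exact hW
  -- Step 5: endpoints of Ê are in X_V
  have hEV : ∀ e ∈ Ehat, ∀ v ∈ e, CAg.mv v ∈ W := by
    intro e heh v hv
    obtain ⟨he, i, hi, hm⟩ := heh
    have hkey : s(wv v, mv v) ∈ M := by
      by_contra hno
      have hwvpart : ∀ w, s(wv v, w) ∈ M → ∃ j < Fintype.card V - k, w = dum j := by
        intro w hw
        have h := (hacc' _ _ hw).1
        rw [hb] at h; simp only [cliqueBaseAcc] at h; simp at h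
        rcases h with ⟨e', he', rfl, hv'⟩ | rfl | ⟨j, hj, rfl⟩
        · exact (hnoprob _ (by rwa [Sym2.eq_swap] at hw) ⟨e', he', v, hv', rfl⟩).elim
        · exact absurd hw hno
        · exact ⟨j, hj, rfl⟩
      refine hstab' (me e) (wv v) ⟨⟨?_, horig_me e he, horig_wv v⟩, ?_, ?_⟩
      · rw [hb]; exact Or.inl (Or.inr (Or.inr (Or.inl ⟨e, he, rfl, Or.inr ⟨v, hv, rfl⟩⟩)))
      · intro w hw
        have := hme_partner e he i hi hm w hw
        subst this
        exact ⟨hp4 e he v hv i hi, horig_me e he, horig_wv v, horig_sel i hi⟩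
      · intro w hw
        obtain ⟨j, hj, rfl⟩ := hwvpart w hw
        exact ⟨hp8 v e he hv j hj, horig_wv v, horig_me e he, Or.inl (Or.inr (Or.inr (Or.inr (Or.inr (Or.inr (Or.inl ⟨j, hj, rfl⟩))))))⟩
    have hT := (hacc' _ _ hkey).2.2
    rcases hT with horg | hW
    · exfalso; revert horg; simp [cliqueOrig]
    · exact hW
  -- Step 6: counting
  set Sv : Set V := {v : V | ∃ e ∈ Ehat, v ∈ e} with hSv
  have hSvfin : Sv.Finite := Set.toFinite _
  have hWfin : W.Finite := by
    apply Set.Finite.subset (Set.Finite.union (Set.finite_range (CAg.mv (V := V)))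
      (Set.finite_range (CAg.me' (V := V))))
    intro x hx
    rcases hW hx with ⟨v, rfl⟩ | ⟨e, he, rfl⟩
    · exact Or.inl ⟨v, rfl⟩
    · exact Or.inr ⟨e, rfl⟩
  have hcount : q + Sv.ncard ≤ W.ncard := by
    have hsub : (CAg.me' '' Ehat ∪ CAg.mv '' Sv : Set (CAg V)) ⊆ W := by
      rintro x (⟨e, he, rfl⟩ | ⟨v, hv, rfl⟩)
      · exact hEX e he
      · obtain ⟨e, heh, hve⟩ := hv
        exact hEV e heh v hve
    have hinj1 : Function.Injective (CAg.me' (V := V)) := fun a b h => CAg.me'.inj h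
    have hinj2 : Function.Injective (CAg.mv (V := V)) := fun a b h => CAg.mv.inj h
    have hdisj : Disjoint (CAg.me' '' Ehat : Set (CAg V)) (CAg.mv '' Sv) := by
      rw [Set.disjoint_left]
      rintro x ⟨e, he, rfl⟩ ⟨v, hv, h⟩
      exact absurd h (by simp)
    calc q + Sv.ncard
        = (CAg.me' '' Ehat : Set (CAg V)).ncard + (CAg.mv '' Sv : Set (CAg V)).ncard := by
          rw [Set.ncard_image_of_injective _ hinj1, Set.ncard_image_of_injective _ hinj2, hEcard]
      _ = (CAg.me' '' Ehat ∪ CAg.mv '' Sv : Set (CAg V)).ncard :=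
          (Set.ncard_union_eq hdisj (hEfin.image _) (hSvfin.image _)).symm
      _ ≤ W.ncard := Set.ncard_le_ncard hsub hWfin
  have hnk : Sv.ncard ≤ k := by omega
  -- edge bound
  have hEsub : hEfin.toFinset ⊆ hSvfin.toFinset.sym2.filter (fun z => ¬ z.IsDiag) := by
    intro z hz
    rw [Set.Finite.mem_toFinset] at hz
    have hzE : z ∈ G.edgeSet := hz.1
    induction z using Sym2.ind with
    | _ a b =>
      rw [Finset.mem_filter, Finset.mk_mem_sym2_iff]
      refine ⟨⟨?_, ?_⟩, ?_⟩
      · rw [Set.Finite.mem_toFinset]; exact ⟨s(a, b), hz, Sym2.mem_mk_left a b⟩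
      · rw [Set.Finite.mem_toFinset]; exact ⟨s(a, b), hz, Sym2.mem_mk_right a b⟩
      · exact G.not_isDiag_of_mem_edgeSet hzE
  have hEfcard : hEfin.toFinset.card = q := by
    rw [← Set.ncard_eq_toFinset_card _ hEfin]; exact hEcard
  have hSfcard : hSvfin.toFinset.card = Sv.ncard :=
    (Set.ncard_eq_toFinset_card _ hSvfin).symm
  have hqchoose : q = k.choose 2 := (Nat.choose_two_right k).symm
  have hqle : q ≤ Sv.ncard.choose 2 := by
    have := Finset.card_le_card hEsub
    rwa [hEfcard, csm_aux_nondiag_card, hSfcard] at this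
  have hnck : Sv.ncard = k := by
    by_contra hne
    have hlt : Sv.ncard < k := lt_of_le_of_ne hnk hne
    have := csm_aux_choose_lt hlt hk
    omega
  refine ⟨hEcard, ?_, ?_, ?_, ?_⟩
  · intro e heh; exact ⟨heh.1, hEX e heh⟩
  · intro e heh v hv; exact hEV e heh v hv
  · exact hnck
  · -- clique
    have hfull : hEfin.toFinset = hSvfin.toFinset.sym2.filter (fun z => ¬ z.IsDiag) := by
      apply Finset.eq_of_subset_of_card_le hEsub
      rw [csm_aux_nondiag_card, hSfcard, hnck, hEfcard, hqchoose]
    intro u hu v hv huv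
    have hmemu : u ∈ hSvfin.toFinset := by rw [Set.Finite.mem_toFinset]; exact hu
    have hmemv : v ∈ hSvfin.toFinset := by rw [Set.Finite.mem_toFinset]; exact hv
    have : s(u, v) ∈ hEfin.toFinset := by
      rw [hfull, Finset.mem_filter, Finset.mk_mem_sym2_iff]
      exact ⟨⟨hmemu, hmemv⟩, by simpa using huv⟩
    rw [Set.Finite.mem_toFinset] at this
    exact this.1
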